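/- Let U and V be real Banach spaces, D ⊆ U a nonempty open set, u₀ ∈ D, and R : D → V continuously (Fréchet) differentiable, with R'(u₀) : U → V a continuous linear bijection with continuous inverse. Suppose there is r > 0 such that the closed ball of radius r centered at u₀ is contained in D, and ‖R'(u₀)⁻¹ ∘ (R'(ũ) − R'(û))‖ ≤ ‖ũ − û‖ / r for all ũ, û in the open ball B(u₀; r), where ‖·‖ is the operator norm on continuous linear maps U → U. Then for every ũ ∈ B(u₀; r), the derivative R'(ũ) : U → V is a continuous linear bijection with continuous inverse. -/
import Mathlib


/-- Newton–Kantorovich, first conclusion: under the Lipschitz-type hypothesis on the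
derivative, `R'(ut)` is a continuous linear bijection with continuous inverse at every
point `ut` of the open ball `B(u₀; r)`. -/
theorem newton_kantorovich_invertibility
    {U V : Type*} [NormedAddCommGroup U] [NormedSpace ℝ U] [CompleteSpace U]
    [NormedAddCommGroup V] [NormedSpace ℝ V] [CompleteSpace V]
    (D : Set U) (hD : IsOpen D) (hDne : D.Nonempty)
    (u₀ : U) (hu₀ : u₀ ∈ D)
    (R : U → V) (hR : ContDiffOn ℝ 1 R D)
    (A : U ≃L[ℝ] V) (hA : (A : U →L[ℝ] V) = fderiv ℝ R u₀)
    (r : ℝ) (hr : 0 < r)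
    (hball : Metric.closedBall u₀ r ⊆ D)
    (hLip : ∀ ut ∈ Metric.ball u₀ r, ∀ uh ∈ Metric.ball u₀ r,
      ‖(A.symm : V →L[ℝ] U).comp (fderiv ℝ R ut - fderiv ℝ R uh)‖ ≤ ‖ut - uh‖ / r) :
    ∀ ut ∈ Metric.ball u₀ r, ∃ B : U ≃L[ℝ] V, (B : U →L[ℝ] V) = fderiv ℝ R ut := by
  intro ut hut
  have hu₀b : u₀ ∈ Metric.ball u₀ r := Metric.mem_ball_self hr
  set t : U →L[ℝ] U := (A.symm : V →L[ℝ] U).comp (fderiv ℝ R u₀ - fderiv ℝ R ut) with ht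
  have hnorm : ‖t‖ < 1 := by
    have h1 := hLip u₀ hu₀b ut hut
    have h2 : ‖u₀ - ut‖ < r := by
      have := Metric.mem_ball.mp hut
      rw [dist_eq_norm] at this
      calc ‖u₀ - ut‖ = ‖ut - u₀‖ := by rw [norm_sub_rev]
        _ < r := this
    exact lt_of_le_of_lt h1 ((div_lt_one hr).mpr h2)
  have w : (U →L[ℝ] U)ˣ := Units.oneSub t hnorm
  have hw : ((Units.oneSub t hnorm : (U →L[ℝ] U)ˣ) : U →L[ℝ] U)
      = (A.symm : V →L[ℝ] U).comp (fderiv ℝ R ut) := by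
    have hid : (A.symm : V →L[ℝ] U).comp (fderiv ℝ R u₀) = ContinuousLinearMap.id ℝ U := by
      rw [← hA]
      ext x
      simp
    show (1 : U →L[ℝ] U) - t = _
    rw [ht, ContinuousLinearMap.comp_sub, hid]
    ext x
    simp
  let e : U ≃L[ℝ] U := ContinuousLinearEquiv.unitsEquiv ℝ U (Units.oneSub t hnorm)
  refine ⟨e.trans A, ?_⟩
  ext x
  have hex : e x = (A.symm : V →L[ℝ] U) (fderiv ℝ R ut x) := by
    have : (e : U →L[ℝ] U) = (A.symm : V →L[ℝ] U).comp (fderiv ℝ R ut) := hw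
    calc e x = ((e : U →L[ℝ] U)) x := rfl
      _ = _ := by rw [this]; rfl
  simp only [ContinuousLinearEquiv.coe_coe, ContinuousLinearEquiv.trans_apply, hex]
  exact A.apply_symm_apply _
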